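/- Let g, h : ℝ → ℝ be n-times differentiable. Then for every real x, dⁿ/dxⁿ [g(x²) h(x²)] = Σ_{k=0}^{n} C(n, k) · A_{n−k}(x) · B_k(x), where A_m(x) = m! Σ_{j=0}^{⌊m/2⌋} (2x)^{m−2j} / ((m−2j)! j!) · g^{(m−j)}(x²) and B_m(x) = m! Σ_{j=0}^{⌊m/2⌋} (2x)^{m−2j} / ((m−2j)! j!) · h^{(m−j)}(x²); i.e., the n-th derivative of the product decomposes binomially into the quantities A_m(x) = d^m/dx^m [g(x²)] and B_m(x) = d^m/dx^m [h(x²)]. -/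

import Mathlib

open Finset

noncomputable def acoef (n j : ℕ) : ℝ :=
  if 2 * j ≤ n then (n.factorial : ℝ) / ((n - 2 * j).factorial * j.factorial) else 0

lemma acoef_zero (n : ℕ) : acoef n 0 = 1 := by
  simp [acoef, Nat.factorial_ne_zero]

lemma acoef_big {n j : ℕ} (h : n < 2 * j) : acoef n j = 0 := by
  simp [acoef, Nat.not_le.mpr h]

lemma hasDerivAt_iteratedDeriv {n m : ℕ} {f : ℝ → ℝ} (hf : ContDiff ℝ (n+1) f)
    (hm : m ≤ n) (y : ℝ) :
    HasDerivAt (iteratedDeriv m f) (iteratedDeriv (m+1) f y) y := by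
  have hd : Differentiable ℝ (iteratedDeriv m f) :=
    hf.differentiable_iteratedDeriv m (by exact_mod_cast Nat.lt_succ_of_le hm)
  have h2 := (hd y).hasDerivAt
  rw [iteratedDeriv_succ]
  exact h2

lemma acoef_rec (n j : ℕ) :
    acoef (n+1) (j+1) = acoef n (j+1) + 2 * ((n - 2*j : ℕ) : ℝ) * acoef n j := by
  by_cases h1 : 2 * (j+1) ≤ n + 1
  · by_cases h2 : 2 * (j+1) ≤ n
    · obtain ⟨k, rfl⟩ : ∃ k, n = 2*j+2+k := ⟨n - (2*j+2), by omega⟩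
      have e1 : 2*j+2+k+1 - 2*(j+1) = k+1 := by omega
      have e2 : 2*j+2+k - 2*(j+1) = k := by omega
      have e3 : 2*j+2+k - 2*j = k+2 := by omega
      have e4 : 2*j ≤ 2*j+2+k := by omega
      simp only [acoef, if_pos h1, if_pos h2, if_pos e4, e1, e2, e3]
      have f1 : ((2*j+2+k+1).factorial : ℝ) = (2*j+2+k+1) * (2*j+2+k).factorial := by
        push_cast [Nat.factorial_succ]; ring
      have f2 : ((k+1).factorial : ℝ) = (k+1) * k.factorial := by
        push_cast [Nat.factorial_succ]; ring
      have f3 : ((k+2).factorial : ℝ) = (k+2) * ((k+1) * k.factorial) := by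
        push_cast [Nat.factorial_succ]; ring
      have f4 : ((j+1).factorial : ℝ) = (j+1) * j.factorial := by
        push_cast [Nat.factorial_succ]; ring
      rw [f1, f2, f3, f4]
      have hk : (k.factorial : ℝ) ≠ 0 := Nat.cast_ne_zero.mpr k.factorial_ne_zero
      have hj : (j.factorial : ℝ) ≠ 0 := Nat.cast_ne_zero.mpr j.factorial_ne_zero
      field_simp
      push_cast
      ring
    · have hn : n = 2*j+1 := by omega
      subst hn
      have e1 : 2*j+1+1 - 2*(j+1) = 0 := by omega
      have e2 : ¬ 2 * (j+1) ≤ 2*j+1 := by omega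
      have e3 : 2*j ≤ 2*j+1 := by omega
      have e4 : 2*j+1 - 2*j = 1 := by omega
      simp only [acoef, if_pos h1, if_neg e2, if_pos e3, e1, e4]
      have f1 : ((2*j+1+1).factorial : ℝ) = (2*j+2) * (2*j+1).factorial := by
        push_cast [Nat.factorial_succ]; ring
      have f4 : ((j+1).factorial : ℝ) = (j+1) * j.factorial := by
        push_cast [Nat.factorial_succ]; ring
      rw [f1, f4]
      have hj : (j.factorial : ℝ) ≠ 0 := Nat.cast_ne_zero.mpr j.factorial_ne_zero
      simp only [Nat.factorial_zero, Nat.factorial_one]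
      field_simp
      push_cast
      ring
  · have l1 : acoef (n+1) (j+1) = 0 := acoef_big (by omega)
    have l2 : acoef n (j+1) = 0 := acoef_big (by omega)
    rw [l1, l2]
    rcases le_or_gt (2*j) n with h | h
    · have : n - 2*j = 0 := by omega
      rw [this]
      simp
    · rw [acoef_big h]
      ring

lemma acoef_sum (n : ℕ) (x : ℝ) (u : ℕ → ℝ) :
    ∑ j ∈ range (n+1), acoef n j *
      ((↑(n-2*j) * (2*x)^(n-2*j-1) * 2) * u (n-j) + (2*x)^(n-2*j) * (u (n-j+1) * (2*x)))
    = ∑ j ∈ range (n+2), acoef (n+1) j * (2*x)^(n+1-2*j) * u (n+1-j) := by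
  have hsplit : ∀ j ∈ range (n+1), acoef n j *
      ((↑(n-2*j) * (2*x)^(n-2*j-1) * 2) * u (n-j) + (2*x)^(n-2*j) * (u (n-j+1) * (2*x)))
      = acoef n j * (↑(n-2*j) * (2*x)^(n-2*j-1) * 2) * u (n-j)
        + acoef n j * (2*x)^(n+1-2*j) * u (n+1-j) := by
    intro j hj
    rw [mem_range, Nat.lt_succ_iff] at hj
    by_cases h : 2*j ≤ n
    · have e1 : n+1-2*j = (n-2*j)+1 := by omega
      have e2 : n+1-j = (n-j)+1 := by omega
      rw [e1, e2, pow_succ]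
      ring
    · rw [acoef_big (by omega)]
      ring
  rw [Finset.sum_congr rfl hsplit, Finset.sum_add_distrib]
  rw [Finset.sum_range_succ' (fun j => acoef (n+1) j * (2*x)^(n+1-2*j) * u (n+1-j)) (n+1)]
  have hstep : ∀ j ∈ range (n+1),
      acoef (n+1) (j+1) * (2*x)^(n+1-2*(j+1)) * u (n+1-(j+1))
      = acoef n j * (↑(n-2*j) * (2*x)^(n-2*j-1) * 2) * u (n-j)
        + acoef n (j+1) * (2*x)^(n+1-2*(j+1)) * u (n+1-(j+1)) := by
    intro j hj
    rw [mem_range, Nat.lt_succ_iff] at hj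
    have e1 : n+1-2*(j+1) = n-2*j-1 := by omega
    have e2 : n+1-(j+1) = n-j := by omega
    rw [acoef_rec, e1, e2]
    ring
  rw [Finset.sum_congr rfl hstep, Finset.sum_add_distrib]
  have last : ∑ j ∈ range (n+1), acoef n (j+1) * (2*x)^(n+1-2*(j+1)) * u (n+1-(j+1))
      = (∑ j ∈ range (n+1), acoef n j * (2*x)^(n+1-2*j) * u (n+1-j))
        - acoef n 0 * (2*x)^(n+1) * u (n+1) + acoef n (n+1) * (2*x)^(n+1-2*(n+1)) * u (n+1-(n+1)) := by
    have := Finset.sum_range_succ' (fun j => acoef n j * (2*x)^(n+1-2*j) * u (n+1-j)) (n+1)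
    rw [Finset.sum_range_succ] at this
    simp only [Nat.sub_zero, Nat.mul_zero] at this ⊢
    linarith [this]
  rw [last, acoef_big (show n < 2*(n+1) by omega), acoef_zero]
  simp only [Nat.mul_zero, Nat.sub_zero, acoef_zero]
  ring

lemma comp_sq : ∀ (n : ℕ) (f : ℝ → ℝ), ContDiff ℝ n f → ∀ x : ℝ,
    iteratedDeriv n (fun t => f (t^2)) x
      = ∑ j ∈ range (n+1), acoef n j * (2*x)^(n-2*j) * iteratedDeriv (n-j) f (x^2) := by
  intro n
  induction n with
  | zero => intro f _ x; simp [acoef_zero]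
  | succ n ih =>
    intro f hf x
    have hfn : ContDiff ℝ n f := hf.of_succ
    have hrw : iteratedDeriv n (fun t => f (t^2)) = fun y =>
        ∑ j ∈ range (n+1), acoef n j * (2*y)^(n-2*j) * iteratedDeriv (n-j) f (y^2) :=
      funext (ih f hfn)
    rw [iteratedDeriv_succ, hrw]
    have hterm : ∀ j ∈ range (n+1), HasDerivAt
        (fun y => acoef n j * (2*y)^(n-2*j) * iteratedDeriv (n-j) f (y^2))
        (acoef n j * ((↑(n-2*j) * (2*x)^(n-2*j-1) * 2) * iteratedDeriv (n-j) f (x^2)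
          + (2*x)^(n-2*j) * (iteratedDeriv (n-j+1) f (x^2) * (2*x)))) x := by
      intro j hj
      have h1 : HasDerivAt (fun y : ℝ => (2*y)^(n-2*j))
          (↑(n-2*j) * (2*x)^(n-2*j-1) * 2) x := by
        have := ((hasDerivAt_id x).const_mul (2:ℝ)).fun_pow (n-2*j)
        simpa using this
      have hd : HasDerivAt (iteratedDeriv (n-j) f) (iteratedDeriv (n-j+1) f (x^2)) (x^2) :=
        hasDerivAt_iteratedDeriv hf (Nat.sub_le n j) (x^2)
      have hsq : HasDerivAt (fun y : ℝ => y^2) (2*x) x := by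
        simpa using hasDerivAt_pow 2 x
      have h2 : HasDerivAt (fun y => iteratedDeriv (n-j) f (y^2))
          (iteratedDeriv (n-j+1) f (x^2) * (2*x)) x := by
        have := HasDerivAt.comp (h := fun y : ℝ => y^2) x hd hsq
        simpa [Function.comp_def] using this
      have := (h1.mul h2).const_mul (acoef n j)
      simpa [mul_assoc] using this
    rw [(HasDerivAt.fun_sum hterm).deriv]
    exact acoef_sum n x (fun m => iteratedDeriv m f (x^2))

lemma leibniz_iteratedDeriv : ∀ (n : ℕ) (f g : ℝ → ℝ), ContDiff ℝ n f → ContDiff ℝ n g →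
    ∀ x : ℝ, iteratedDeriv n (fun t => f t * g t) x =
      ∑ k ∈ range (n+1), (n.choose k : ℝ) * iteratedDeriv (n-k) f x * iteratedDeriv k g x := by
  intro n
  induction n with
  | zero => intro f g _ _ x; simp
  | succ n ih =>
    intro f g hf hg x
    have hrw : iteratedDeriv n (fun t => f t * g t) = fun y =>
        ∑ k ∈ range (n+1), (n.choose k : ℝ) * iteratedDeriv (n-k) f y * iteratedDeriv k g y :=
      funext (ih f g hf.of_succ hg.of_succ)
    rw [iteratedDeriv_succ, hrw]
    have hterm : ∀ k ∈ range (n+1), HasDerivAt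
        (fun y => (n.choose k : ℝ) * iteratedDeriv (n-k) f y * iteratedDeriv k g y)
        ((n.choose k : ℝ) * (iteratedDeriv (n-k+1) f x * iteratedDeriv k g x
          + iteratedDeriv (n-k) f x * iteratedDeriv (k+1) g x)) x := by
      intro k hk
      rw [mem_range, Nat.lt_succ_iff] at hk
      have h1 := hasDerivAt_iteratedDeriv hf (Nat.sub_le n k) x
      have h2 := hasDerivAt_iteratedDeriv hg hk x
      have := (h1.mul h2).const_mul ((n.choose k : ℝ))
      simpa [mul_assoc] using this
    rw [(HasDerivAt.fun_sum hterm).deriv]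
    have hsplit : ∀ k ∈ range (n+1),
        (n.choose k : ℝ) * (iteratedDeriv (n-k+1) f x * iteratedDeriv k g x
          + iteratedDeriv (n-k) f x * iteratedDeriv (k+1) g x)
        = (n.choose k : ℝ) * iteratedDeriv (n+1-k) f x * iteratedDeriv k g x
          + (n.choose k : ℝ) * iteratedDeriv (n-k) f x * iteratedDeriv (k+1) g x := by
      intro k hk
      rw [mem_range, Nat.lt_succ_iff] at hk
      have e : n - k + 1 = n + 1 - k := by omega
      rw [e]; ring
    rw [Finset.sum_congr rfl hsplit, Finset.sum_add_distrib]
    rw [Finset.sum_range_succ'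
      (fun k => ((n+1).choose k : ℝ) * iteratedDeriv (n+1-k) f x * iteratedDeriv k g x) (n+1)]
    have hstep : ∀ k ∈ range (n+1),
        (((n+1).choose (k+1) : ℕ) : ℝ) * iteratedDeriv (n+1-(k+1)) f x * iteratedDeriv (k+1) g x
        = (n.choose k : ℝ) * iteratedDeriv (n-k) f x * iteratedDeriv (k+1) g x
          + (n.choose (k+1) : ℝ) * iteratedDeriv (n+1-(k+1)) f x * iteratedDeriv (k+1) g x := by
      intro k hk
      have e : n+1-(k+1) = n-k := by omega
      have c : (((n+1).choose (k+1) : ℕ) : ℝ) = (n.choose k : ℝ) + (n.choose (k+1) : ℝ) := by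
        rw [Nat.choose_succ_succ]; push_cast; ring
      rw [e, c]; ring
    rw [Finset.sum_congr rfl hstep, Finset.sum_add_distrib]
    have last : ∑ k ∈ range (n+1),
        (n.choose (k+1) : ℝ) * iteratedDeriv (n+1-(k+1)) f x * iteratedDeriv (k+1) g x
        = (∑ k ∈ range (n+1), (n.choose k : ℝ) * iteratedDeriv (n+1-k) f x * iteratedDeriv k g x)
          - (n.choose 0 : ℝ) * iteratedDeriv (n+1) f x * iteratedDeriv 0 g x
          + (n.choose (n+1) : ℝ) * iteratedDeriv (n+1-(n+1)) f x * iteratedDeriv (n+1) g x := by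
      have := Finset.sum_range_succ'
        (fun k => (n.choose k : ℝ) * iteratedDeriv (n+1-k) f x * iteratedDeriv k g x) (n+1)
      rw [Finset.sum_range_succ] at this
      simp only [Nat.sub_zero] at this ⊢
      linarith [this]
    rw [last]
    simp [Nat.choose_succ_self]
    ring

theorem iteratedDeriv_mul_comp_sq_binomial (n : ℕ) (g h : ℝ → ℝ)
    (hg : ContDiff ℝ n g) (hh : ContDiff ℝ n h)
    (A B : ℕ → ℝ → ℝ)
    (hA : ∀ m : ℕ, ∀ x : ℝ, A m x =
      (m.factorial : ℝ) * ∑ j ∈ Finset.range (m / 2 + 1),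
        (2 * x) ^ (m - 2 * j) / (((m - 2 * j).factorial : ℝ) * j.factorial) *
          iteratedDeriv (m - j) g (x ^ 2))
    (hB : ∀ m : ℕ, ∀ x : ℝ, B m x =
      (m.factorial : ℝ) * ∑ j ∈ Finset.range (m / 2 + 1),
        (2 * x) ^ (m - 2 * j) / (((m - 2 * j).factorial : ℝ) * j.factorial) *
          iteratedDeriv (m - j) h (x ^ 2))
    (x : ℝ) :
    iteratedDeriv n (fun t => g (t ^ 2) * h (t ^ 2)) x =
      ∑ k ∈ Finset.range (n + 1), (n.choose k : ℝ) * A (n - k) x * B k x ∧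
    (∀ m : ℕ, m ≤ n → A m x = iteratedDeriv m (fun t => g (t ^ 2)) x) ∧
    (∀ m : ℕ, m ≤ n → B m x = iteratedDeriv m (fun t => h (t ^ 2)) x) := by
  have reform : ∀ (f : ℝ → ℝ) (m : ℕ),
      (m.factorial : ℝ) * ∑ j ∈ Finset.range (m / 2 + 1),
        (2 * x) ^ (m - 2 * j) / (((m - 2 * j).factorial : ℝ) * j.factorial) *
          iteratedDeriv (m - j) f (x ^ 2)
      = ∑ j ∈ range (m+1), acoef m j * (2*x)^(m-2*j) * iteratedDeriv (m-j) f (x^2) := by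
    intro f m
    have hsub : range (m/2+1) ⊆ range (m+1) := by
      apply Finset.range_subset_range.mpr; omega
    rw [Finset.mul_sum]
    have e1 : ∑ j ∈ range (m+1), acoef m j * (2*x)^(m-2*j) * iteratedDeriv (m-j) f (x^2)
        = ∑ j ∈ range (m/2+1), acoef m j * (2*x)^(m-2*j) * iteratedDeriv (m-j) f (x^2) := by
      refine (Finset.sum_subset hsub ?_).symm
      intro j hj hj2
      rw [mem_range] at hj hj2
      rw [acoef_big (by omega)]
      ring
    rw [e1]
    apply Finset.sum_congr rfl
    intro j hj
    rw [mem_range] at hj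
    have h2 : 2*j ≤ m := by omega
    simp only [acoef, if_pos h2]
    ring
  have hAeq : ∀ m : ℕ, m ≤ n → A m x = iteratedDeriv m (fun t => g (t ^ 2)) x := by
    intro m hm
    rw [hA, reform g m, comp_sq m g (hg.of_le (by exact_mod_cast hm)) x]
  have hBeq : ∀ m : ℕ, m ≤ n → B m x = iteratedDeriv m (fun t => h (t ^ 2)) x := by
    intro m hm
    rw [hB, reform h m, comp_sq m h (hh.of_le (by exact_mod_cast hm)) x]
  refine ⟨?_, hAeq, hBeq⟩
  have hsq : ContDiff ℝ n (fun t : ℝ => t^2) := contDiff_id.pow 2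
  have hg2 : ContDiff ℝ n (fun t => g (t^2)) := hg.comp hsq
  have hh2 : ContDiff ℝ n (fun t => h (t^2)) := hh.comp hsq
  rw [leibniz_iteratedDeriv n _ _ hg2 hh2 x]
  refine Finset.sum_congr rfl ?_
  intro k hk
  rw [mem_range, Nat.lt_succ_iff] at hk
  rw [hAeq (n-k) (by omega), hBeq k hk]
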